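/- Suppose v_1, …, v_n ∈ ℝ^n are eigenvectors of M with M v_k = λ_k v_k, v_1 = 𝟙 (with λ_1 = 1), and they are Π-orthonormal: v_k^T Π v_l = δ_{kl} for all k, l. Then for every t ∈ ℝ the autocovariance matrix admits the spectral decomposition B(t) = Σ_{k=2}^{n} exp(−t(1−λ_k)) (Π v_k)(Π v_k)^T. -/

import Mathlib

open Matrix

open NormedSpace in
private lemma exp_mulVec_eigen {n : ℕ} (N : Matrix (Fin n) (Fin n) ℝ) (w : Fin n → ℝ) (μ : ℝ)
    (h : N.mulVec w = μ • w) :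
    (exp N).mulVec w = Real.exp μ • w := by
  letI : SeminormedRing (Matrix (Fin n) (Fin n) ℝ) := Matrix.linftyOpSemiNormedRing
  letI : NormedRing (Matrix (Fin n) (Fin n) ℝ) := Matrix.linftyOpNormedRing
  letI : NormedAlgebra ℝ (Matrix (Fin n) (Fin n) ℝ) := Matrix.linftyOpNormedAlgebra
  have hpow : ∀ k : ℕ, (N ^ k).mulVec w = μ ^ k • w := by
    intro k; induction k with
    | zero => simp
    | succ k ih =>
      rw [pow_succ, pow_succ, ← Matrix.mulVec_mulVec, h, Matrix.mulVec_smul, ih,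
        smul_smul, mul_comm]
  let L : Matrix (Fin n) (Fin n) ℝ →ₗ[ℝ] (Fin n → ℝ) :=
    { toFun := fun X => X.mulVec w
      map_add' := fun X Y => Matrix.add_mulVec X Y w
      map_smul' := fun c X => Matrix.smul_mulVec c X w }
  have hs : Summable (fun k : ℕ => (Nat.factorial k : ℝ)⁻¹ • N ^ k) := expSeries_summable' N
  have h1 : (exp N).mulVec w
      = L.toContinuousLinearMap (∑' k : ℕ, (Nat.factorial k : ℝ)⁻¹ • N ^ k) := by
    rw [exp_eq_tsum ℝ]; rfl
  rw [h1, L.toContinuousLinearMap.map_tsum hs]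
  have h2 : ∀ k : ℕ, L.toContinuousLinearMap ((Nat.factorial k : ℝ)⁻¹ • N ^ k)
      = ((Nat.factorial k : ℝ)⁻¹ * μ ^ k) • w := by
    intro k
    show ((Nat.factorial k : ℝ)⁻¹ • N ^ k).mulVec w = _
    rw [Matrix.smul_mulVec, hpow, smul_smul]
  simp_rw [h2]
  rw [Summable.tsum_smul_const, Real.exp_eq_exp_ℝ, exp_eq_tsum ℝ]
  simp [smul_eq_mul]
  simpa [smul_eq_mul] using expSeries_summable' (𝕂 := ℝ) μ

private lemma mul_vecMulVec' {n : ℕ} (C : Matrix (Fin n) (Fin n) ℝ) (a b : Fin n → ℝ) :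
    C * Matrix.vecMulVec a b = Matrix.vecMulVec (C.mulVec a) b := by
  ext i j
  simp [Matrix.mul_apply, Matrix.vecMulVec_apply, Matrix.mulVec, dotProduct,
    Finset.sum_mul, mul_assoc]

private lemma vecMulVec_smul' {n : ℕ} (c : ℝ) (a b : Fin n → ℝ) :
    Matrix.vecMulVec (c • a) b = c • Matrix.vecMulVec a b := by
  ext i j
  simp [Matrix.vecMulVec_apply, mul_assoc]

/-- If `v_1, …, v_n` are `Π`-orthonormal eigenvectors of `M`
with `v_1 = 𝟙` (eigenvalue 1), then for every `t`,
`B(t) = ∑_{k=2}^n exp(−t(1−λ_k)) (Π v_k)(Π v_k)ᵀ`. -/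
theorem stmt_6 (n : ℕ) [NeZero n] (A : Matrix (Fin n) (Fin n) ℝ)
    (hAsymm : A.IsSymm) (hAnonneg : ∀ i j, 0 ≤ A i j)
    (d : Fin n → ℝ) (hd : ∀ i, d i = ∑ j, A i j) (hdpos : ∀ i, 0 < d i)
    (m : ℝ) (hm : m = (∑ i, ∑ j, A i j) / 2)
    (M : Matrix (Fin n) (Fin n) ℝ) (hM : M = (Matrix.diagonal d)⁻¹ * A)
    (Pi : Matrix (Fin n) (Fin n) ℝ) (hPi : Pi = (2 * m)⁻¹ • Matrix.diagonal d)
    (P : ℝ → Matrix (Fin n) (Fin n) ℝ)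
    (hP : ∀ t, P t = NormedSpace.exp ((-t) • ((1 : Matrix (Fin n) (Fin n) ℝ) - M)))
    (B : ℝ → Matrix (Fin n) (Fin n) ℝ)
    (hB : ∀ t, B t = Pi * P t -
      Matrix.vecMulVec (fun i => d i / (2 * m)) (fun j => d j / (2 * m)))
    (v : Fin n → Fin n → ℝ) (lam : Fin n → ℝ)
    (hv : ∀ k, M.mulVec (v k) = lam k • v k)
    (hv1 : v 0 = fun _ => (1 : ℝ)) (hlam1 : lam 0 = 1)
    (horth : ∀ k l, (v k) ⬝ᵥ Pi.mulVec (v l) = if k = l then 1 else 0)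
    (t : ℝ) :
    B t = ∑ k ∈ Finset.univ.erase 0,
      Real.exp (-t * (1 - lam k)) •
        Matrix.vecMulVec (Pi.mulVec (v k)) (Pi.mulVec (v k)) := by
  -- Π is symmetric
  have hPisymm : Piᵀ = Pi := by
    rw [hPi, Matrix.transpose_smul, Matrix.diagonal_transpose]
  have hPiSym : ∀ i j, Pi i j = Pi j i := by
    intro i j
    conv_rhs => rw [← hPisymm, Matrix.transpose_apply]
  -- the matrix of eigenvectors
  set V : Matrix (Fin n) (Fin n) ℝ := Matrix.of (fun i k => v k i) with hV
  have hWV : (Vᵀ * Pi) * V = 1 := by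
    rw [mul_assoc]
    ext k l
    have h := horth k l
    simp only [Matrix.mul_apply, Matrix.transpose_apply, Matrix.of_apply, hV,
      dotProduct, Matrix.mulVec, Matrix.one_apply] at h ⊢
    rw [← h]
  have hVW : V * (Vᵀ * Pi) = 1 := mul_eq_one_comm.mp hWV
  -- resolution of the identity
  have hres : ∑ k, Matrix.vecMulVec (v k) (Pi.mulVec (v k)) = 1 := by
    ext i j
    have := congrFun (congrFun hVW i) j
    simp only [Matrix.mul_apply, hV, Matrix.of_apply] at this
    simp only [Matrix.sum_apply]
    rw [← this]
    apply Finset.sum_congr rfl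
    intro k _
    simp only [Matrix.vecMulVec_apply, Matrix.mulVec, dotProduct, Matrix.transpose_apply,
      Matrix.of_apply, Finset.mul_sum]
    apply Finset.sum_congr rfl
    intro l _
    rw [hPiSym j l]; ring
  -- eigenvalue action of P t
  have hPmul : ∀ k, (P t).mulVec (v k) = Real.exp (-t * (1 - lam k)) • v k := by
    intro k
    rw [hP]
    apply exp_mulVec_eigen
    rw [Matrix.smul_mulVec, Matrix.sub_mulVec, Matrix.one_mulVec, hv]
    have hsub : v k - lam k • v k = (1 - lam k) • v k := by rw [sub_smul, one_smul]
    rw [hsub, smul_smul]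
  -- full spectral decomposition of Π P(t)
  have hfull : Pi * P t
      = ∑ k, Real.exp (-t * (1 - lam k)) •
          Matrix.vecMulVec (Pi.mulVec (v k)) (Pi.mulVec (v k)) := by
    calc Pi * P t = (Pi * P t) * 1 := by rw [mul_one]
    _ = (Pi * P t) * ∑ k, Matrix.vecMulVec (v k) (Pi.mulVec (v k)) := by rw [hres]
    _ = ∑ k, (Pi * P t) * Matrix.vecMulVec (v k) (Pi.mulVec (v k)) := Finset.mul_sum _ _ _
    _ = _ := by
        apply Finset.sum_congr rfl
        intro k _
        rw [mul_vecMulVec', ← Matrix.mulVec_mulVec, hPmul, Matrix.mulVec_smul, vecMulVec_smul']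
  -- the projection π^T π is the k = 0 term
  have hpi0 : Pi.mulVec (v 0) = fun i => d i / (2 * m) := by
    funext i
    rw [hv1, hPi]
    simp [Matrix.mulVec, dotProduct, Matrix.diagonal_apply, Finset.sum_ite_eq,
      div_eq_mul_inv, mul_comm]
  have hterm0 : Real.exp (-t * (1 - lam 0)) •
      Matrix.vecMulVec (Pi.mulVec (v 0)) (Pi.mulVec (v 0))
      = Matrix.vecMulVec (fun i => d i / (2 * m)) (fun j => d j / (2 * m)) := by
    rw [hlam1, hpi0]
    norm_num [Real.exp_zero]
  rw [hB, hfull, ← Finset.sum_erase_add Finset.univ _ (Finset.mem_univ (0 : Fin n)), hterm0,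
    add_sub_cancel_right]
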